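/- Let q ∈ [0, 1] with q ≠ 1/2 and set p = q²/(2q² − 2q + 1). Then (p − √(p(1 − p)))/(2p − 1) = q. -/

import Mathlib

/-- Inversion identity for the amplitude map: for `q ∈ [0,1]`, `q ≠ 1/2`, and
`p = q²/(2q² − 2q + 1)`, one has `(p − √(p(1 − p)))/(2p − 1) = q`. -/
theorem amplitude_map_inversion (q : ℝ) (hq : q ∈ Set.Icc (0 : ℝ) 1)
    (hq2 : q ≠ 1 / 2) (p : ℝ) (hp : p = q ^ 2 / (2 * q ^ 2 - 2 * q + 1)) :
    (p - Real.sqrt (p * (1 - p))) / (2 * p - 1) = q := by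
  obtain ⟨hq0, hq1⟩ := hq
  have hD : 2 * q ^ 2 - 2 * q + 1 > 0 := by nlinarith [sq_nonneg (2*q - 1)]
  have hDne : 2 * q ^ 2 - 2 * q + 1 ≠ 0 := ne_of_gt hD
  have h2q : 2 * q - 1 ≠ 0 := by
    intro h; apply hq2; linarith
  have h1p : 1 - p = (1 - q) ^ 2 / (2 * q ^ 2 - 2 * q + 1) := by
    rw [hp, eq_div_iff hDne, sub_mul, div_mul_cancel₀ _ hDne]; ring
  have hsqrt : Real.sqrt (p * (1 - p)) = q * (1 - q) / (2 * q ^ 2 - 2 * q + 1) := by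
    rw [h1p, hp]
    have : q ^ 2 / (2 * q ^ 2 - 2 * q + 1) * ((1 - q) ^ 2 / (2 * q ^ 2 - 2 * q + 1))
        = (q * (1 - q) / (2 * q ^ 2 - 2 * q + 1)) ^ 2 := by
      field_simp
    rw [this, Real.sqrt_sq (div_nonneg (mul_nonneg hq0 (by linarith)) hD.le)]
  rw [hsqrt, hp]
  rw [div_eq_iff (by
    intro h
    apply h2q
    have : (2 * (q ^ 2 / (2 * q ^ 2 - 2 * q + 1)) - 1) * (2 * q ^ 2 - 2 * q + 1) = 0 := by
      rw [h]; ring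
    rw [sub_mul, mul_assoc, div_mul_cancel₀ _ hDne] at this
    nlinarith [this])]
  rw [div_sub_div_same, eq_comm, mul_sub, ← mul_assoc, mul_div_assoc', eq_div_iff hDne, sub_mul, div_mul_cancel₀ _ hDne]
  ring
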